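/- Let 𝔛 = (Γ, c⁽⁰⁾) be a configuration and call a colour c₀ nonempty if for every v ∈ Γ there is at most one w with c⁽⁰⁾(v,w) = c₀. Then for every k ≥ 0 and all v₁, v₂, w₁, w₂ ∈ Γ, if c^{(k)}(v₁,w₁) = c^{(k)}(v₂,w₂) under the Weisfeiler–Leman iteration, then for every sequence of nonempty colours (c₁,...,c_l) with l ≤ 2^k, there is a walk from v₁ to w₁ with edge colours c₁,...,c_l (i.e., vertices u₀=v₁, u₁, ..., u_l=w₁ with c⁽⁰⁾(u_{i−1},u_i)=c_i) if and only if there is such a walk from v₂ to w₂. (WL colours at step k know all walks of length ≤ 2^k.) -/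

import Mathlib

universe u v

/-- The type of colours after `k` Weisfeiler-Leman iterations. -/
def WLColor (C : Type v) : ℕ → Type v
  | 0 => C
  | k + 1 => WLColor C k × (WLColor C k → WLColor C k → ℕ)

/-- The Weisfeiler-Leman iterated colouring. -/
noncomputable def WLiter {Γ : Type u} {C : Type v} (c : Γ → Γ → C) :
    (k : ℕ) → Γ → Γ → WLColor C k
  | 0 => c
  | k + 1 => fun v₁ v₂ =>
      (WLiter c k v₁ v₂,
        fun c₁ c₂ => Nat.card {w : Γ // WLiter c k v₁ w = c₁ ∧ WLiter c k w v₂ = c₂})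

/-- The number of nontrivial Weisfeiler-Leman iterations: the first `k` at which
the step `k → k+1` does not refine the partition of `Γ × Γ`. -/
noncomputable def WLnum {Γ : Type u} {C : Type v} (c : Γ → Γ → C) : ℕ :=
  sInf {k | ∀ v₁ v₂ u₁ u₂ : Γ,
    WLiter c (k + 1) v₁ v₂ = WLiter c (k + 1) u₁ u₂ ↔
      WLiter c k v₁ v₂ = WLiter c k u₁ u₂}

/-- A colour is nonempty if each vertex has at most one outgoing edge of that colour. -/
def NonemptyColor {Γ : Type u} {C : Type v} (c : Γ → Γ → C) (c₀ : C) : Prop :=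
  ∀ v w w' : Γ, c v w = c₀ → c v w' = c₀ → w = w'

/-- Existence of a directed walk of length `n`. -/
def dWalk {Γ : Type u} (R : Γ → Γ → Prop) : ℕ → Γ → Γ → Prop
  | 0, v, w => v = w
  | n + 1, v, w => ∃ u, R v u ∧ dWalk R n u w

/-- Directed graph distance. -/
noncomputable def ddist {Γ : Type u} (R : Γ → Γ → Prop) (v w : Γ) : ℕ :=
  sInf {n | dWalk R n v w}

/-- Diameter of a directed graph. -/
noncomputable def ddiam {Γ : Type u} (R : Γ → Γ → Prop) : ℕ :=
  sSup (Set.range fun p : Γ × Γ => ddist R p.1 p.2)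

/-- `ColorWalk c x y cs ws` means `ws` is the list of intermediate vertices of a walk from
`x` to `y` whose consecutive edges have the colours listed in `cs`. -/
def ColorWalk {Γ : Type u} {C : Type v} (c : Γ → Γ → C) :
    Γ → Γ → List C → List Γ → Prop
  | x, y, [d], [] => c x y = d
  | x, y, d :: ds, u :: us => c x u = d ∧ ColorWalk c u y ds us
  | _, _, _, _ => False

def Reach {Γ : Type u} {C : Type v} (c : Γ → Γ → C) (x y : Γ) (cs : List C) : Prop :=
  ∃ ws, ColorWalk c x y cs ws

lemma colorWalk_cons {Γ : Type u} {C : Type v} (c : Γ → Γ → C) (x y u : Γ) (d : C)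
    (ds : List C) (us : List Γ) :
    ColorWalk c x y (d :: ds) (u :: us) ↔ c x u = d ∧ ColorWalk c u y ds us := by
  cases ds <;> exact Iff.rfl

lemma reach_nil {Γ : Type u} {C : Type v} (c : Γ → Γ → C) (x y : Γ) :
    ¬ Reach c x y [] := by
  rintro ⟨ws, h⟩; cases ws <;> exact h

lemma reach_single {Γ : Type u} {C : Type v} (c : Γ → Γ → C) (x y : Γ) (d : C) :
    Reach c x y [d] ↔ c x y = d := by
  constructor
  · rintro ⟨ws, h⟩
    cases ws with
    | nil => exact h
    | cons u us =>
      rw [colorWalk_cons] at h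
      exact absurd ⟨us, h.2⟩ (reach_nil c u y)
  · intro h; exact ⟨[], h⟩

lemma reach_cons {Γ : Type u} {C : Type v} (c : Γ → Γ → C) (x y : Γ) (d : C)
    (ds : List C) (hds : ds ≠ []) :
    Reach c x y (d :: ds) ↔ ∃ u, c x u = d ∧ Reach c u y ds := by
  constructor
  · rintro ⟨ws, h⟩
    cases ws with
    | nil =>
      cases ds with
      | nil => exact absurd rfl hds
      | cons e es => exact absurd h id
    | cons u us =>
      rw [colorWalk_cons] at h
      exact ⟨u, h.1, us, h.2⟩
  · rintro ⟨u, h1, ws, h2⟩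
    exact ⟨u :: ws, (colorWalk_cons ..).mpr ⟨h1, h2⟩⟩

lemma reach_append {Γ : Type u} {C : Type v} (c : Γ → Γ → C) (x y : Γ)
    (cs₁ cs₂ : List C) (h₁ : cs₁ ≠ []) (h₂ : cs₂ ≠ []) :
    Reach c x y (cs₁ ++ cs₂) ↔ ∃ u, Reach c x u cs₁ ∧ Reach c u y cs₂ := by
  induction cs₁ generalizing x with
  | nil => exact absurd rfl h₁
  | cons d ds ih =>
    cases ds with
    | nil =>
      rw [List.singleton_append, reach_cons c x y d cs₂ h₂]
      exact ⟨fun ⟨u, h1, h2⟩ => ⟨u, (reach_single c x u d).mpr h1, h2⟩,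
        fun ⟨u, h1, h2⟩ => ⟨u, (reach_single c x u d).mp h1, h2⟩⟩
    | cons e es =>
      rw [List.cons_append, reach_cons c x y d _ (by simp)]
      constructor
      · rintro ⟨a, ha, hr⟩
        obtain ⟨u, h1, h2⟩ := (ih a (by simp)).mp hr
        exact ⟨u, (reach_cons c x u d _ (by simp)).mpr ⟨a, ha, h1⟩, h2⟩
      · rintro ⟨u, hxu, h2⟩
        obtain ⟨a, ha, h1⟩ := (reach_cons c x u d _ (by simp)).mp hxu
        exact ⟨a, ha, (ih a (by simp)).mpr ⟨u, h1, h2⟩⟩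

lemma WL_walks_aux {Γ : Type u} {C : Type v} [Finite Γ] (c : Γ → Γ → C) :
    ∀ (k : ℕ) (v₁ w₁ v₂ w₂ : Γ), WLiter c k v₁ w₁ = WLiter c k v₂ w₂ →
      ∀ cs : List C, cs.length ≤ 2 ^ k → Reach c v₁ w₁ cs → Reach c v₂ w₂ cs := by
  intro k
  induction k with
  | zero =>
    intro v₁ w₁ v₂ w₂ h cs hlen hr
    cases cs with
    | nil => exact absurd hr (reach_nil c v₁ w₁)
    | cons d ds =>
      cases ds with
      | nil =>
        rw [reach_single] at hr ⊢
        rw [show c v₂ w₂ = WLiter c 0 v₂ w₂ from rfl, ← h]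
        exact hr
      | cons e es => simp [pow_zero] at hlen
  | succ k ih =>
    intro v₁ w₁ v₂ w₂ h cs hlen hr
    simp only [WLiter] at h
    replace h := Prod.ext_iff.mp h
    obtain ⟨h1, h2⟩ := h
    dsimp only at h1 h2
    by_cases hsmall : cs.length ≤ 2 ^ k
    · exact ih v₁ w₁ v₂ w₂ h1 cs hsmall hr
    · push_neg at hsmall
      have hn : 0 < 2 ^ k := Nat.pow_pos (by norm_num)
      have hcs : cs.take (2 ^ k) ++ cs.drop (2 ^ k) = cs := List.take_append_drop _ cs
      have ht : (cs.take (2 ^ k)).length = 2 ^ k := by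
        rw [List.length_take]; omega
      have hd : (cs.drop (2 ^ k)).length ≤ 2 ^ k := by
        rw [List.length_drop]
        have : 2 ^ (k + 1) = 2 ^ k + 2 ^ k := by ring
        omega
      have htne : cs.take (2 ^ k) ≠ [] := by
        intro hh; rw [hh] at ht; simp at ht; omega
      have hdne : cs.drop (2 ^ k) ≠ [] := by
        intro hh
        have := congrArg List.length hh
        simp only [List.length_drop, List.length_nil] at this
        omega
      rw [← hcs] at hr ⊢
      rw [reach_append c _ _ _ _ htne hdne] at hr ⊢
      obtain ⟨u, hru, huw⟩ := hr
      have hcard := congrFun (congrFun h2 (WLiter c k v₁ u)) (WLiter c k u w₁)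
      have hpos : Nat.card {w : Γ // WLiter c k v₁ w = WLiter c k v₁ u ∧
          WLiter c k w w₁ = WLiter c k u w₁} ≠ 0 := by
        rw [Nat.card_ne_zero]
        exact ⟨⟨⟨u, rfl, rfl⟩⟩, inferInstance⟩
      rw [hcard] at hpos
      obtain ⟨⟨u', hu'1, hu'2⟩⟩ := (Nat.card_ne_zero.mp hpos).1
      refine ⟨u', ?_, ?_⟩
      · exact ih v₁ u v₂ u' hu'1.symm _ (le_of_eq ht) hru
      · exact ih u w₁ u' w₂ hu'2.symm _ hd huw

/-- WL colours at step `k` know all walks of nonempty colours of length at most `2^k`. -/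
theorem WL_knows_walks {Γ : Type u} {C : Type v} [Finite Γ] (c : Γ → Γ → C)
    (hi : ∀ (c₀ : C) (v : Γ), c v v = c₀ → ∀ v₁ v₂ : Γ, c v₁ v₂ = c₀ → v₁ = v₂)
    (hii : ∀ c₀ : C, ∃ c₀' : C, ∀ v₁ v₂ : Γ, c v₁ v₂ = c₀ → c v₂ v₁ = c₀') :
    ∀ (k : ℕ) (v₁ w₁ v₂ w₂ : Γ), WLiter c k v₁ w₁ = WLiter c k v₂ w₂ →
      ∀ cs : List C, cs.length ≤ 2 ^ k → (∀ d ∈ cs, NonemptyColor c d) →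
        ((∃ ws : List Γ, ColorWalk c v₁ w₁ cs ws) ↔
          (∃ ws : List Γ, ColorWalk c v₂ w₂ cs ws)) := by
  intro k v₁ w₁ v₂ w₂ h cs hlen _
  exact ⟨fun hr => WL_walks_aux c k v₁ w₁ v₂ w₂ h cs hlen hr,
    fun hr => WL_walks_aux c k v₂ w₂ v₁ w₁ h.symm cs hlen hr⟩
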